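/- Let b ≥ 2 be an integer and ε ∈ (0,1) with b(1−2ε)² ≤ 1. Then the reconstruction problem for the b-ary tree T_b and the binary symmetric channel with error probability ε is not solvable, i.e. lim_{n→∞} D_V(P_n^{+1}, P_n^{−1}) = 0. -/

import Mathlib

open Filter

/-- The distribution of the configuration at level `n` of the `b`-ary tree,
for the broadcast process with channel `M`, given that the root has value `i`.
Vertices at level `n` are encoded as paths `Fin n → Fin b`. -/
noncomputable def levelDist {A : Type} [Fintype A] [DecidableEq A]
    (M : A → A → ℝ) (b : ℕ) (i : A) : (n : ℕ) → ((Fin n → Fin b) → A) → ℝ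
  | 0 => fun σ => if σ = (fun _ => i) then 1 else 0
  | n + 1 => fun τ => ∑ σ : (Fin n → Fin b) → A, levelDist M b i n σ *
      ∏ w : Fin (n + 1) → Fin b, M (σ fun m => w m.castSucc) (τ w)

/-- Total variation distance between two (densities of) probability measures
on a finite set. -/
noncomputable def tvDist {Ω : Type*} [Fintype Ω] (P Q : Ω → ℝ) : ℝ :=
  (1 / 2) * ∑ σ, |P σ - Q σ|
/-- The binary symmetric channel with error probability `ε`, on the alphabet
`Bool` (where `true` represents `+1` and `false` represents `-1`). -/
noncomputable def bsc (ε : ℝ) : Bool → Bool → ℝ :=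
  fun i j => if i = j then 1 - ε else ε

/-! ### Auxiliary combinatorial equivalences -/

private def splitEquiv (b n : ℕ) (A : Type) :
    (Fin b → (Fin n → Fin b) → A) ≃ ((Fin (n+1) → Fin b) → A) where
  toFun g w := g (w 0) (fun i => w i.succ)
  invFun σ c v := σ (Fin.cons c v)
  left_inv g := by funext c v; simp
  right_inv σ := by
    funext w
    simp only []
    congr 1
    exact Fin.cons_self_tail w

private lemma splitEquiv_cons {b n : ℕ} {A : Type} (g : Fin b → (Fin n → Fin b) → A)
    (c : Fin b) (v : Fin n → Fin b) :
    splitEquiv b n A g (Fin.cons c v) = g c v := by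
  simp [splitEquiv]

private lemma cons_comp_castSucc {b n : ℕ} (c : Fin b) (w : Fin (n+1) → Fin b) :
    (fun m : Fin (n+1) => (Fin.cons c w : Fin (n+2) → Fin b) m.castSucc)
      = Fin.cons c (fun m : Fin n => w m.castSucc) := by
  funext m
  induction m using Fin.cases with
  | zero => simp
  | succ m => rw [← Fin.succ_castSucc]; simp

/-! ### Basic properties of `levelDist` -/

section levelDistBasic

variable {A : Type} [Fintype A] [DecidableEq A]

private lemma levelDist_nonneg (M : A → A → ℝ) (hM : ∀ i j, 0 ≤ M i j) (b : ℕ) (i : A) :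
    ∀ n σ, 0 ≤ levelDist M b i n σ := by
  intro n
  induction n generalizing i with
  | zero => intro σ; simp only [levelDist]; positivity
  | succ n ih =>
    intro τ
    apply Finset.sum_nonneg
    intro σ _
    exact mul_nonneg (ih i σ) (Finset.prod_nonneg fun w _ => hM _ _)

private lemma levelDist_sum_one (M : A → A → ℝ) (hM : ∀ i, ∑ j, M i j = 1) (b : ℕ) (i : A) :
    ∀ n, ∑ σ : (Fin n → Fin b) → A, levelDist M b i n σ = 1 := by
  intro n
  induction n generalizing i with
  | zero => simp [levelDist]
  | succ n ih =>
    have key : ∀ σ : (Fin n → Fin b) → A,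
        ∑ τ : (Fin (n+1) → Fin b) → A, ∏ w, M (σ fun m => w m.castSucc) (τ w) = 1 := by
      intro σ
      rw [← Fintype.prod_sum (fun (w : Fin (n+1) → Fin b) (j : A) =>
        M (σ fun m => w m.castSucc) j)]
      simp [hM]
    rw [show (levelDist M b i (n+1)) = fun τ => ∑ σ : (Fin n → Fin b) → A,
        levelDist M b i n σ * ∏ w, M (σ fun m => w m.castSucc) (τ w) from rfl]
    rw [Finset.sum_comm]
    simp_rw [← Finset.mul_sum, key, mul_one]
    exact ih i

/-- Factorization of the level distribution over the `b` subtrees of the root. -/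
private lemma levelDist_factor (M : A → A → ℝ) (b : ℕ) :
    ∀ (n : ℕ) (i : A) (τ : (Fin (n+1) → Fin b) → A),
    levelDist M b i (n+1) τ
      = ∏ c : Fin b, ∑ j, M i j * levelDist M b j n (fun v => τ (Fin.cons c v)) := by
  intro n
  induction n with
  | zero =>
    intro i τ
    have hcons : ∀ (c : Fin b) (v : Fin 0 → Fin b),
        (Fin.cons c v : Fin 1 → Fin b) = (fun _ => c) := by
      intro c v; funext x
      induction x using Fin.cases with
      | zero => simp
      | succ m => exact m.elim0
    show (∑ σ : (Fin 0 → Fin b) → A, (if σ = (fun _ => i) then (1:ℝ) else 0) *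
        ∏ w : Fin 1 → Fin b, M (σ fun m => w m.castSucc) (τ w)) = _
    rw [Fintype.sum_eq_single (fun _ => i : (Fin 0 → Fin b) → A)
      (by intro σ hσ; rw [if_neg hσ, zero_mul])]
    rw [if_pos rfl, one_mul]
    rw [← (Equiv.funUnique (Fin 1) (Fin b)).symm.prod_comp
      (fun w : Fin 1 → Fin b => M i (τ w))]
    apply Finset.prod_congr rfl
    intro c _
    have h1 : (fun v : Fin 0 → Fin b => τ (Fin.cons c v)) = (fun _ => τ (fun _ => c)) := by
      funext v; rw [hcons]
    simp only [levelDist, h1]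
    have h2 : ∀ j : A, ((fun _ : Fin 0 → Fin b => τ fun _ => c) = fun _ => j)
        ↔ τ (fun _ => c) = j := by
      intro j
      constructor
      · intro hh; exact congrFun hh (fun x => x.elim0)
      · intro hh; funext v; exact hh
    simp only [h2]
    simp [Equiv.funUnique]
    congr 1
  | succ n ih =>
    intro i τ
    show (∑ σ : (Fin (n+1) → Fin b) → A, levelDist M b i (n+1) σ *
        ∏ w : Fin (n+2) → Fin b, M (σ fun m => w m.castSucc) (τ w)) = _
    rw [← (splitEquiv b n A).sum_comp (fun σ => levelDist M b i (n+1) σ *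
        ∏ w : Fin (n+2) → Fin b, M (σ fun m => w m.castSucc) (τ w))]
    have key : ∀ g : Fin b → (Fin n → Fin b) → A,
        levelDist M b i (n+1) (splitEquiv b n A g) *
          ∏ w : Fin (n+2) → Fin b, M ((splitEquiv b n A g) fun m => w m.castSucc) (τ w)
        = ∏ c : Fin b, ((∑ j, M i j * levelDist M b j n (g c)) *
            ∏ w' : Fin (n+1) → Fin b,
              M (g c fun m => w' m.castSucc) (τ (Fin.cons c w'))) := by
      intro g
      rw [ih]
      have h1 : ∀ c : Fin b, (fun v => splitEquiv b n A g (Fin.cons c v)) = g c := by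
        intro c; funext v; exact splitEquiv_cons g c v
      simp_rw [h1]
      have h2 : (∏ w : Fin (n+2) → Fin b,
            M ((splitEquiv b n A g) fun m => w m.castSucc) (τ w))
          = ∏ c : Fin b, ∏ w' : Fin (n+1) → Fin b,
              M (g c fun m => w' m.castSucc) (τ (Fin.cons c w')) := by
        rw [← (Fin.consEquiv (fun _ : Fin (n+2) => Fin b)).prod_comp
          (fun w : Fin (n+2) → Fin b => M ((splitEquiv b n A g) fun m => w m.castSucc) (τ w))]
        rw [Fintype.prod_prod_type]
        apply Finset.prod_congr rfl; intro c _
        apply Finset.prod_congr rfl; intro w' _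
        have h3 : (Fin.consEquiv (fun _ : Fin (n+2) => Fin b)) (c, w') = Fin.cons c w' := rfl
        rw [h3, cons_comp_castSucc, splitEquiv_cons]
      rw [h2, ← Finset.prod_mul_distrib]
    simp_rw [key]
    rw [← Fintype.prod_sum (fun (c : Fin b) (σ' : (Fin n → Fin b) → A) =>
        (∑ j, M i j * levelDist M b j n σ') *
          ∏ w' : Fin (n+1) → Fin b, M (σ' fun m => w' m.castSucc) (τ (Fin.cons c w')))]
    apply Finset.prod_congr rfl; intro c _
    simp_rw [Finset.sum_mul, mul_assoc]
    rw [Finset.sum_comm]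
    apply Finset.sum_congr rfl; intro j _
    rw [← Finset.mul_sum]
    rfl

end levelDistBasic
/-! ### The Bhattacharyya coefficient of the two level distributions -/

private lemma bsc_nonneg {ε : ℝ} (hε0 : 0 ≤ ε) (hε1 : ε ≤ 1) (i j : Bool) :
    0 ≤ bsc ε i j := by
  unfold bsc; split <;> linarith

private lemma bsc_row_sum (ε : ℝ) (i : Bool) : ∑ j, bsc ε i j = 1 := by
  cases i <;> simp [bsc]

/-- The Bhattacharyya coefficient between the level-`n` distributions given
root `+` and root `-`. -/
private noncomputable def BCn (ε : ℝ) (b n : ℕ) : ℝ :=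
  ∑ σ : (Fin n → Fin b) → Bool,
    Real.sqrt (levelDist (bsc ε) b true n σ * levelDist (bsc ε) b false n σ)

private lemma prod_sqrt {ι : Type*} (s : Finset ι) (f : ι → ℝ) (hf : ∀ i ∈ s, 0 ≤ f i) :
    ∏ i ∈ s, Real.sqrt (f i) = Real.sqrt (∏ i ∈ s, f i) := by
  classical
  induction s using Finset.induction_on with
  | empty => simp
  | insert a s ha ih =>
    rw [Finset.prod_insert ha, Finset.prod_insert ha,
      ih (fun i hi => hf i (Finset.mem_insert_of_mem hi)),
      Real.sqrt_mul (hf a (Finset.mem_insert_self a s))]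

section bscFacts

variable {ε : ℝ} {b : ℕ}

private lemma lv_nonneg (hε0 : 0 ≤ ε) (hε1 : ε ≤ 1) (i : Bool) (n : ℕ) (σ : (Fin n → Fin b) → Bool) :
    0 ≤ levelDist (bsc ε) b i n σ :=
  levelDist_nonneg (bsc ε) (bsc_nonneg hε0 hε1) b i n σ

private lemma lv_sum_one (i : Bool) (n : ℕ) :
    ∑ σ : (Fin n → Fin b) → Bool, levelDist (bsc ε) b i n σ = 1 :=
  levelDist_sum_one (bsc ε) (bsc_row_sum ε) b i n

/-- `BCn` is between 0 and 1. -/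
private lemma BCn_nonneg (n : ℕ) : 0 ≤ BCn ε b n :=
  Finset.sum_nonneg fun σ _ => Real.sqrt_nonneg _

private lemma BCn_le_one (hε0 : 0 ≤ ε) (hε1 : ε ≤ 1) (n : ℕ) : BCn ε b n ≤ 1 := by
  have hsq : (BCn ε b n) ^ 2 ≤ 1 := by
    have := Finset.sum_sq_le_sum_mul_sum_of_sq_eq_mul (Finset.univ : Finset ((Fin n → Fin b) → Bool))
      (f := fun σ => levelDist (bsc ε) b true n σ)
      (g := fun σ => levelDist (bsc ε) b false n σ)
      (r := fun σ => Real.sqrt (levelDist (bsc ε) b true n σ * levelDist (bsc ε) b false n σ))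
      (fun σ _ => lv_nonneg hε0 hε1 true n σ) (fun σ _ => lv_nonneg hε0 hε1 false n σ)
      (fun σ _ => Real.sq_sqrt (mul_nonneg (lv_nonneg hε0 hε1 true n σ)
        (lv_nonneg hε0 hε1 false n σ)))
    rw [lv_sum_one true n, lv_sum_one false n] at this
    simpa [BCn] using this
  nlinarith [BCn_nonneg (ε := ε) (b := b) n]

/-- The one-step-refined distributions seen through the channel. -/
private noncomputable def Qp (ε : ℝ) (b n : ℕ) (σ : (Fin n → Fin b) → Bool) : ℝ :=
  (1 - ε) * levelDist (bsc ε) b true n σ + ε * levelDist (bsc ε) b false n σ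

private noncomputable def Qm (ε : ℝ) (b n : ℕ) (σ : (Fin n → Fin b) → Bool) : ℝ :=
  ε * levelDist (bsc ε) b true n σ + (1 - ε) * levelDist (bsc ε) b false n σ

private lemma sum_bsc_lv_true (n : ℕ) (σ : (Fin n → Fin b) → Bool) :
    ∑ j, bsc ε true j * levelDist (bsc ε) b j n σ = Qp ε b n σ := by
  simp [Fintype.sum_bool, bsc, Qp]

private lemma sum_bsc_lv_false (n : ℕ) (σ : (Fin n → Fin b) → Bool) :
    ∑ j, bsc ε false j * levelDist (bsc ε) b j n σ = Qm ε b n σ := by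
  simp [Fintype.sum_bool, bsc, Qm]

/-- The key product identity: the Bhattacharyya coefficient at level `n+1` is the `b`-th
power of the Bhattacharyya coefficient of the channel-smoothed level-`n` distributions. -/
private lemma BCn_succ (hε0 : 0 ≤ ε) (hε1 : ε ≤ 1) (n : ℕ) :
    BCn ε b (n+1)
      = (∑ σ : (Fin n → Fin b) → Bool, Real.sqrt (Qp ε b n σ * Qm ε b n σ)) ^ b := by
  have hQp : ∀ σ, 0 ≤ Qp ε b n σ := fun σ => by
    have := lv_nonneg hε0 hε1 (b := b) true n σ
    have := lv_nonneg hε0 hε1 (b := b) false n σ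
    unfold Qp; nlinarith
  have hQm : ∀ σ, 0 ≤ Qm ε b n σ := fun σ => by
    have := lv_nonneg hε0 hε1 (b := b) true n σ
    have := lv_nonneg hε0 hε1 (b := b) false n σ
    unfold Qm; nlinarith
  have hfac : ∀ (i : Bool) (τ : (Fin (n+1) → Fin b) → Bool),
      levelDist (bsc ε) b i (n+1) τ
        = ∏ c : Fin b, ∑ j, bsc ε i j * levelDist (bsc ε) b j n (fun v => τ (Fin.cons c v)) :=
    levelDist_factor (bsc ε) b n
  have key : ∀ τ : (Fin (n+1) → Fin b) → Bool,
      Real.sqrt (levelDist (bsc ε) b true (n+1) τ * levelDist (bsc ε) b false (n+1) τ)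
        = ∏ c : Fin b, Real.sqrt
            (Qp ε b n (fun v => τ (Fin.cons c v)) * Qm ε b n (fun v => τ (Fin.cons c v))) := by
    intro τ
    rw [hfac true τ, hfac false τ]
    simp_rw [sum_bsc_lv_true, sum_bsc_lv_false]
    rw [← Finset.prod_mul_distrib,
      prod_sqrt _ _ (fun c _ => mul_nonneg (hQp _) (hQm _))]
  unfold BCn
  simp_rw [key]
  rw [← (splitEquiv b n Bool).sum_comp (fun τ => ∏ c : Fin b,
    Real.sqrt (Qp ε b n (fun v => τ (Fin.cons c v)) * Qm ε b n (fun v => τ (Fin.cons c v))))]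
  have h1 : ∀ (g : Fin b → (Fin n → Fin b) → Bool) (c : Fin b),
      (fun v => splitEquiv b n Bool g (Fin.cons c v)) = g c := by
    intro g c; funext v; exact splitEquiv_cons g c v
  simp_rw [h1]
  rw [← Fintype.sum_pow (fun σ : (Fin n → Fin b) → Bool =>
    Real.sqrt (Qp ε b n σ * Qm ε b n σ)) b]
/-! ### The channel inequality (Hellinger contraction for the BSC) -/

private lemma sqrt_concave_aux (a z l : ℝ) (ha : 0 ≤ a) (hz : 0 ≤ z)
    (hl0 : 0 ≤ l) (hl1 : l ≤ 1) :
    (1 - l) * a + l * Real.sqrt z ≤ Real.sqrt ((1 - l) * a ^ 2 + l * z) := by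
  have hs0 : 0 ≤ Real.sqrt z := Real.sqrt_nonneg z
  have hs2 : Real.sqrt z ^ 2 = z := Real.sq_sqrt hz
  have h1 : 0 ≤ (1 - l) * a + l * Real.sqrt z :=
    add_nonneg (mul_nonneg (by linarith) ha) (mul_nonneg hl0 hs0)
  have h2 : 0 ≤ (1 - l) * a ^ 2 + l * z :=
    add_nonneg (mul_nonneg (by linarith) (sq_nonneg a)) (mul_nonneg hl0 hz)
  rw [Real.le_sqrt h1 h2]
  nlinarith [mul_nonneg (mul_nonneg hl0 (by linarith : (0:ℝ) ≤ 1 - l))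
    (sq_nonneg (a - Real.sqrt z))]

private lemma QpQm_identity {ε : ℝ} {b : ℕ} (n : ℕ) (σ : (Fin n → Fin b) → Bool) :
    Qp ε b n σ * Qm ε b n σ
      = (1 - (1 - 2*ε)^2) * ((levelDist (bsc ε) b true n σ + levelDist (bsc ε) b false n σ)/2)^2
        + (1 - 2*ε)^2 * (levelDist (bsc ε) b true n σ * levelDist (bsc ε) b false n σ) := by
  unfold Qp Qm; ring

private lemma S_lower {ε : ℝ} {b : ℕ} (hε0 : 0 ≤ ε) (hε1 : ε ≤ 1) (n : ℕ) :
    1 - (1 - 2*ε)^2 * (1 - BCn ε b n)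
      ≤ ∑ σ : (Fin n → Fin b) → Bool, Real.sqrt (Qp ε b n σ * Qm ε b n σ) := by
  have hθ0 : 0 ≤ (1 - 2*ε)^2 := sq_nonneg _
  have hθ1 : (1 - 2*ε)^2 ≤ 1 := by nlinarith
  have hpt : ∀ σ : (Fin n → Fin b) → Bool,
      (1 - (1 - 2*ε)^2) * ((levelDist (bsc ε) b true n σ + levelDist (bsc ε) b false n σ)/2)
          + (1 - 2*ε)^2 * Real.sqrt (levelDist (bsc ε) b true n σ * levelDist (bsc ε) b false n σ)
        ≤ Real.sqrt (Qp ε b n σ * Qm ε b n σ) := by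
    intro σ
    rw [QpQm_identity n σ]
    exact sqrt_concave_aux _ _ _
      (by have := lv_nonneg hε0 hε1 (b := b) true n σ
          have := lv_nonneg hε0 hε1 (b := b) false n σ; linarith)
      (mul_nonneg (lv_nonneg hε0 hε1 true n σ) (lv_nonneg hε0 hε1 false n σ)) hθ0 hθ1
  calc 1 - (1 - 2*ε)^2 * (1 - BCn ε b n)
      = (1 - (1 - 2*ε)^2) *
          (∑ σ : (Fin n → Fin b) → Bool,
            (levelDist (bsc ε) b true n σ + levelDist (bsc ε) b false n σ)/2)
        + (1 - 2*ε)^2 * BCn ε b n := by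
        rw [show (∑ σ : (Fin n → Fin b) → Bool,
            (levelDist (bsc ε) b true n σ + levelDist (bsc ε) b false n σ)/2)
          = (∑ σ : (Fin n → Fin b) → Bool, levelDist (bsc ε) b true n σ)/2
            + (∑ σ : (Fin n → Fin b) → Bool, levelDist (bsc ε) b false n σ)/2 by
            rw [← Finset.sum_div, Finset.sum_add_distrib]
            ring]
        rw [lv_sum_one true n, lv_sum_one false n]
        ring
    _ = ∑ σ : (Fin n → Fin b) → Bool,
          ((1 - (1 - 2*ε)^2) * ((levelDist (bsc ε) b true n σ + levelDist (bsc ε) b false n σ)/2)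
          + (1 - 2*ε)^2 * Real.sqrt (levelDist (bsc ε) b true n σ *
              levelDist (bsc ε) b false n σ)) := by
        rw [Finset.sum_add_distrib, ← Finset.mul_sum, ← Finset.mul_sum]
        rfl
    _ ≤ _ := Finset.sum_le_sum fun σ _ => hpt σ

/-! ### Elementary polynomial and sequence lemmas -/

private lemma one_sub_pow_le {x : ℝ} (hx0 : 0 ≤ x) (hx1 : x ≤ 1) :
    ∀ b : ℕ, 2 ≤ b → 1 - (1-x)^b ≤ b*x - x^2/2 := by
  intro b hb
  induction b, hb using Nat.le_induction with
  | base => push_cast; nlinarith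
  | succ n hn ih =>
    have h1 : (1-x)^n ≤ 1 := pow_le_one₀ (by linarith) (by linarith)
    have h0 : (0:ℝ) ≤ (1-x)^n := pow_nonneg (by linarith) n
    have := ih
    push_cast
    calc 1 - (1-x)^(n+1) = (1 - (1-x)^n) + x*(1-x)^n := by ring
    _ ≤ (n*x - x^2/2) + x*1 := by
        apply add_le_add this
        exact mul_le_mul_of_nonneg_left h1 hx0
    _ = (n+1)*x - x^2/2 := by ring

private lemma tendsto_zero_of_rec (h : ℕ → ℝ) (c : ℝ) (hc : 0 < c)
    (h0 : ∀ n, 0 ≤ h n) (hrec : ∀ n, h (n+1) ≤ h n - c * h n ^ 2) :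
    Filter.Tendsto h atTop (nhds 0) := by
  have hmono : Antitone h := antitone_nat_of_succ_le fun n =>
    le_trans (hrec n) (by nlinarith [h0 n, sq_nonneg (h n)])
  have hbdd : BddBelow (Set.range h) := ⟨0, by rintro x ⟨n, rfl⟩; exact h0 n⟩
  have hconv : Filter.Tendsto h atTop (nhds (⨅ n, h n)) := tendsto_atTop_ciInf hmono hbdd
  set L := ⨅ n, h n with hL
  have hL0 : 0 ≤ L := le_ciInf h0
  have h1 : Filter.Tendsto (fun n => h n - c * h n ^ 2) atTop (nhds (L - c * L ^ 2)) :=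
    hconv.sub ((hconv.pow 2).const_mul c)
  have h2 : Filter.Tendsto (fun n => h (n+1)) atTop (nhds L) :=
    hconv.comp (tendsto_add_atTop_nat 1)
  have hle : L ≤ L - c * L ^ 2 := le_of_tendsto_of_tendsto' h2 h1 fun n => hrec n
  have h3 : L ^ 2 ≤ 0 := by
    have h4 : c * L ^ 2 ≤ c * 0 := by linarith
    exact le_of_mul_le_mul_left h4 hc
  have h5 : L = 0 := by
    have h6 : L ^ 2 = 0 := le_antisymm h3 (sq_nonneg L)
    exact pow_eq_zero_iff two_ne_zero |>.1 h6
  rwa [h5] at hconv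
/-! ### Total variation versus the Bhattacharyya coefficient -/

private lemma tv_nonneg {Ω : Type*} [Fintype Ω] (P Q : Ω → ℝ) : 0 ≤ tvDist P Q := by
  unfold tvDist
  positivity

private lemma tv_le_sqrt {ε : ℝ} {b : ℕ} (hε0 : 0 ≤ ε) (hε1 : ε ≤ 1) (n : ℕ) :
    tvDist (levelDist (bsc ε) b true n) (levelDist (bsc ε) b false n)
      ≤ Real.sqrt 2 * Real.sqrt (1 - BCn ε b n) := by
  set P := levelDist (bsc ε) b true n with hP
  set Q := levelDist (bsc ε) b false n with hQ
  have hPn : ∀ σ, 0 ≤ P σ := lv_nonneg hε0 hε1 true n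
  have hQn : ∀ σ, 0 ≤ Q σ := lv_nonneg hε0 hε1 false n
  have habs : ∀ σ, |P σ - Q σ|
      = |Real.sqrt (P σ) - Real.sqrt (Q σ)| * (Real.sqrt (P σ) + Real.sqrt (Q σ)) := by
    intro σ
    rw [← abs_of_nonneg (add_nonneg (Real.sqrt_nonneg (P σ)) (Real.sqrt_nonneg (Q σ))),
      ← abs_mul]
    congr 1
    have h1 := Real.sq_sqrt (hPn σ)
    have h2 := Real.sq_sqrt (hQn σ)
    linear_combination h2 - h1
  have hsub : ∑ σ, (Real.sqrt (P σ) - Real.sqrt (Q σ))^2 = 2 - 2 * BCn ε b n := by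
    have hpt : ∀ σ, (Real.sqrt (P σ) - Real.sqrt (Q σ))^2
        = P σ + Q σ - 2 * Real.sqrt (P σ * Q σ) := by
      intro σ
      have h1 := Real.sq_sqrt (hPn σ)
      have h2 := Real.sq_sqrt (hQn σ)
      rw [Real.sqrt_mul (hPn σ)]
      linear_combination h1 + h2
    simp_rw [hpt]
    rw [Finset.sum_sub_distrib, Finset.sum_add_distrib, ← Finset.mul_sum]
    rw [show (∑ σ, P σ) = 1 from lv_sum_one true n, show (∑ σ, Q σ) = 1 from lv_sum_one false n]
    rw [show BCn ε b n = ∑ σ, Real.sqrt (P σ * Q σ) from rfl]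
    ring
  have hadd : ∑ σ, (Real.sqrt (P σ) + Real.sqrt (Q σ))^2 = 2 + 2 * BCn ε b n := by
    have hpt : ∀ σ, (Real.sqrt (P σ) + Real.sqrt (Q σ))^2
        = P σ + Q σ + 2 * Real.sqrt (P σ * Q σ) := by
      intro σ
      have h1 := Real.sq_sqrt (hPn σ)
      have h2 := Real.sq_sqrt (hQn σ)
      rw [Real.sqrt_mul (hPn σ)]
      linear_combination h1 + h2
    simp_rw [hpt]
    rw [Finset.sum_add_distrib, Finset.sum_add_distrib, ← Finset.mul_sum]
    rw [show (∑ σ, P σ) = 1 from lv_sum_one true n, show (∑ σ, Q σ) = 1 from lv_sum_one false n]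
    rw [show BCn ε b n = ∑ σ, Real.sqrt (P σ * Q σ) from rfl]
    ring
  have hBC0 : 0 ≤ BCn ε b n := BCn_nonneg n
  have hBC1 : BCn ε b n ≤ 1 := BCn_le_one hε0 hε1 n
  have hCS : (∑ σ, |P σ - Q σ|)^2 ≤ (2 - 2 * BCn ε b n) * 4 := by
    calc (∑ σ, |P σ - Q σ|)^2
        = (∑ σ, |Real.sqrt (P σ) - Real.sqrt (Q σ)| * (Real.sqrt (P σ) + Real.sqrt (Q σ)))^2 := by
          simp_rw [habs]
      _ ≤ (∑ σ, |Real.sqrt (P σ) - Real.sqrt (Q σ)|^2) *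
            (∑ σ, (Real.sqrt (P σ) + Real.sqrt (Q σ))^2) := by
          exact Finset.sum_mul_sq_le_sq_mul_sq Finset.univ _ _
      _ = (2 - 2 * BCn ε b n) * (2 + 2 * BCn ε b n) := by
          simp_rw [sq_abs]; rw [hsub, hadd]
      _ ≤ (2 - 2 * BCn ε b n) * 4 := by nlinarith
  have htv : tvDist P Q ^ 2 ≤ 2 * (1 - BCn ε b n) := by
    unfold tvDist
    nlinarith [hCS]
  have htv0 : 0 ≤ tvDist P Q := tv_nonneg P Q
  calc tvDist P Q = Real.sqrt (tvDist P Q ^ 2) := (Real.sqrt_sq htv0).symm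
    _ ≤ Real.sqrt (2 * (1 - BCn ε b n)) := Real.sqrt_le_sqrt htv
    _ = Real.sqrt 2 * Real.sqrt (1 - BCn ε b n) := Real.sqrt_mul (by norm_num) _

/-! ### The main theorem -/

/-- If `b (1-2ε)² ≤ 1` then the reconstruction problem for the `b`-ary tree and
the binary symmetric channel with error probability `ε` is not solvable:
`D_V(P_n^{+1}, P_n^{-1}) → 0`. -/
theorem bsc_reconstruction_not_solvable (b : ℕ) (hb : 2 ≤ b) (ε : ℝ)
    (hε0 : 0 < ε) (hε1 : ε < 1) (h : (b : ℝ) * (1 - 2 * ε) ^ 2 ≤ 1) :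
    Tendsto
      (fun n => tvDist (levelDist (bsc ε) b true n) (levelDist (bsc ε) b false n))
      atTop (nhds 0) := by
  set θ2 := (1 - 2*ε)^2 with hθ2
  set hs : ℕ → ℝ := fun n => 1 - BCn ε b n with hhs
  have hθ0 : 0 ≤ θ2 := sq_nonneg _
  have hθ1 : θ2 ≤ 1 := by rw [hθ2]; nlinarith
  have hs0 : ∀ n, 0 ≤ hs n := fun n => by
    have := BCn_le_one (b := b) hε0.le hε1.le n; simp only [hhs]; linarith
  have hs1 : ∀ n, hs n ≤ 1 := fun n => by
    have := BCn_nonneg (ε := ε) (b := b) n; simp only [hhs]; linarith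
  -- the master recursion
  have hrec : ∀ n, hs (n+1) ≤ (b : ℝ) * (θ2 * hs n) - (θ2 * hs n)^2/2 := by
    intro n
    have hx0 : 0 ≤ θ2 * hs n := mul_nonneg hθ0 (hs0 n)
    have hx1 : θ2 * hs n ≤ 1 := by nlinarith [hs1 n, hs0 n]
    have hSl : 1 - θ2 * hs n
        ≤ ∑ σ : (Fin n → Fin b) → Bool, Real.sqrt (Qp ε b n σ * Qm ε b n σ) := by
      have := S_lower (b := b) hε0.le hε1.le n
      simpa [hhs, hθ2, mul_comm] using this
    have hpow : (1 - θ2 * hs n) ^ b ≤ BCn ε b (n+1) := by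
      rw [BCn_succ hε0.le hε1.le n]
      exact pow_le_pow_left₀ (by linarith) hSl b
    have hpoly : 1 - (1 - θ2 * hs n)^b ≤ (b : ℝ) * (θ2 * hs n) - (θ2 * hs n)^2/2 :=
      one_sub_pow_le hx0 hx1 b hb
    have : hs (n+1) ≤ 1 - (1 - θ2 * hs n)^b := by
      simp only [hhs]; linarith
    linarith
  clear_value θ2 hs
  -- convergence of hs to 0
  have hBCtend : Tendsto hs atTop (nhds 0) := by
    rcases eq_or_lt_of_le hθ0 with hθz | hθpos
    · -- θ2 = 0 : hs is eventually zero
      apply tendsto_atTop_of_eventually_const (i₀ := 1)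
      intro i hi
      obtain ⟨n, rfl⟩ := Nat.exists_eq_add_of_le hi
      have h1 := hrec n
      rw [← hθz] at h1
      simp only [zero_mul, mul_zero] at h1
      have h2 := hs0 (n + 1)
      have h3 : (1 : ℕ) + n = n + 1 := Nat.add_comm 1 n
      rw [h3]
      norm_num at h1
      linarith
    · -- θ2 > 0
      apply tendsto_zero_of_rec hs (θ2^2/2) (by positivity) hs0
      intro n
      have h1 := hrec n
      have h5 : 0 ≤ (1 - (b : ℝ) * θ2) * hs n :=
        mul_nonneg (by linarith) (hs0 n)
      calc hs (n+1) ≤ (b : ℝ) * (θ2 * hs n) - (θ2 * hs n)^2/2 := h1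
        _ = hs n - θ2^2/2 * hs n ^ 2 - (1 - (b : ℝ) * θ2) * hs n := by ring
        _ ≤ hs n - θ2^2/2 * hs n ^ 2 := by linarith
  -- squeeze
  have hsq : Tendsto (fun n => Real.sqrt 2 * Real.sqrt (hs n)) atTop (nhds 0) := by
    have h1 : Tendsto (fun n => Real.sqrt (hs n)) atTop (nhds 0) := by
      have := (Real.continuous_sqrt.tendsto 0).comp hBCtend
      simpa [Function.comp_def] using this
    have := h1.const_mul (Real.sqrt 2)
    simpa using this
  refine squeeze_zero (fun n => tv_nonneg _ _) (fun n => ?_) hsq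
  have := tv_le_sqrt (b := b) hε0.le hε1.le n
  rw [hhs]
  exact this
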